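/- arXiv:1906.01598 — 2 statements merged into one kernel-verified Lean document; each statement's English description precedes it below -/
import Mathlib

section
/- Discrete maximum principle: Let Ψ be a mesh function on the grid {x_0=0 < x_1 < ... < x_N = 1} × {t_0=0 < t_1 < ... < t_M}. Suppose for all k ≥ 1: Ψ(0,t_k) − D⁺_x Ψ(0,t_k) ≥ 0 and Ψ(1,t_k) + D⁻_x Ψ(1,t_k) ≥ 0; Ψ(x_j,0) ≥ 0 for all j; and L^{N,M}Ψ(x_j,t_k) := D⁻_t Ψ − ε δ²_x Ψ + a Ψ ≥ 0 at all interior mesh points (1 ≤ j ≤ N−1, 1 ≤ k ≤ M), where ε > 0 and a(x_j,t_k) > 0. Then Ψ ≥ 0 at all mesh points. -/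
/-- Discrete maximum principle for the finite difference operator. -/
theorem stmt_9 (N M : ℕ) (hN : 2 ≤ N) (hM : 1 ≤ M)
    (ε : ℝ) (hε : 0 < ε)
    (x t : ℕ → ℝ)
    (hx0 : x 0 = 0) (hxN : x N = 1) (hxmono : ∀ j, j < N → x j < x (j + 1))
    (ht0 : t 0 = 0) (htmono : ∀ k, k < M → t k < t (k + 1))
    (a Ψ : ℕ → ℕ → ℝ)
    (ha : ∀ j ≤ N, ∀ k ≤ M, 0 < a j k)
    -- Robin boundary conditions at x = 0 and x = 1, for k ≥ 1
    (hβ0 : ∀ k, 1 ≤ k → k ≤ M →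
      0 ≤ Ψ 0 k - (Ψ 1 k - Ψ 0 k) / (x 1 - x 0))
    (hβ1 : ∀ k, 1 ≤ k → k ≤ M →
      0 ≤ Ψ N k + (Ψ N k - Ψ (N - 1) k) / (x N - x (N - 1)))
    -- initial condition
    (hinit : ∀ j ≤ N, 0 ≤ Ψ j 0)
    -- L^{N,M} Ψ ≥ 0 at interior mesh points
    (hL : ∀ j k, 1 ≤ j → j < N → 1 ≤ k → k ≤ M →
      0 ≤ (Ψ j k - Ψ j (k - 1)) / (t k - t (k - 1))
        - ε * (((Ψ (j + 1) k - Ψ j k) / (x (j + 1) - x j)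
              - (Ψ j k - Ψ (j - 1) k) / (x j - x (j - 1)))
            / ((x (j + 1) - x (j - 1)) / 2))
        + a j k * Ψ j k) :
    ∀ j ≤ N, ∀ k ≤ M, 0 ≤ Ψ j k := by
  have main : ∀ k, k ≤ M → ∀ j ≤ N, 0 ≤ Ψ j k := by
    intro k
    induction k with
    | zero => intro _ j hj; exact hinit j hj
    | succ k ih =>
      intro hk1
      have ihk := ih (Nat.le_of_succ_le hk1)
      by_contra h
      push_neg at h
      obtain ⟨j0, hj0, hneg⟩ := h
      obtain ⟨m, hm, hmin⟩ := Finset.exists_min_image (Finset.range (N + 1))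
        (fun j => Ψ j (k + 1)) ⟨j0, Finset.mem_range.mpr (Nat.lt_succ_of_le hj0)⟩
      have hmN : m ≤ N := Nat.lt_succ_iff.mp (Finset.mem_range.mp hm)
      have hmin' : ∀ j ≤ N, Ψ m (k + 1) ≤ Ψ j (k + 1) := fun j hj =>
        hmin j (Finset.mem_range.mpr (Nat.lt_succ_of_le hj))
      have hmneg : Ψ m (k + 1) < 0 :=
        lt_of_le_of_lt (hmin' j0 hj0) hneg
      rcases Nat.eq_zero_or_pos m with hm0 | hm1
      · subst hm0
        have hb := hβ0 (k + 1) (Nat.succ_le_succ (Nat.zero_le k)) hk1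
        have hx01 : 0 < x 1 - x 0 := sub_pos.mpr (hxmono 0 (by omega))
        have h1 : Ψ 0 (k + 1) ≤ Ψ 1 (k + 1) := hmin' 1 (by omega)
        have hq : 0 ≤ (Ψ 1 (k + 1) - Ψ 0 (k + 1)) / (x 1 - x 0) :=
          div_nonneg (by linarith) hx01.le
        linarith
      · rcases eq_or_lt_of_le hmN with hmN' | hmlt
        · rw [hmN'] at hmneg hmin'
          have hb := hβ1 (k + 1) (Nat.succ_le_succ (Nat.zero_le k)) hk1
          have hN1 : N - 1 + 1 = N := by omega
          have hxN1 : 0 < x N - x (N - 1) := by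
            have := hxmono (N - 1) (by omega)
            rw [hN1] at this; linarith
          have h1 : Ψ N (k + 1) ≤ Ψ (N - 1) (k + 1) := hmin' (N - 1) (by omega)
          have hq : (Ψ N (k + 1) - Ψ (N - 1) (k + 1)) / (x N - x (N - 1)) ≤ 0 :=
            div_nonpos_of_nonpos_of_nonneg (by linarith) hxN1.le
          linarith
        · -- interior
          have hLm := hL m (k + 1) hm1 hmlt (Nat.succ_le_succ (Nat.zero_le k)) hk1
          simp only [Nat.add_sub_cancel] at hLm
          have hm11 : m - 1 + 1 = m := by omega
          have hxp : 0 < x (m + 1) - x m := sub_pos.mpr (hxmono m hmlt)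
          have hxm : 0 < x m - x (m - 1) := by
            have := hxmono (m - 1) (by omega)
            rw [hm11] at this; linarith
          have hts : 0 < t (k + 1) - t k := sub_pos.mpr (htmono k (by omega))
          have hprev : 0 ≤ Ψ m k := ihk m hmN
          have hterm1 : (Ψ m (k + 1) - Ψ m k) / (t (k + 1) - t k) ≤ 0 :=
            div_nonpos_of_nonpos_of_nonneg (by linarith) hts.le
          have hDp : 0 ≤ (Ψ (m + 1) (k + 1) - Ψ m (k + 1)) / (x (m + 1) - x m) :=
            div_nonneg (by have := hmin' (m + 1) hmlt; linarith) hxp.le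
          have hDm : (Ψ m (k + 1) - Ψ (m - 1) (k + 1)) / (x m - x (m - 1)) ≤ 0 :=
            div_nonpos_of_nonpos_of_nonneg
              (by have := hmin' (m - 1) (by omega); linarith) hxm.le
          have hden : 0 < (x (m + 1) - x (m - 1)) / 2 := by linarith
          have hdelta : 0 ≤ ((Ψ (m + 1) (k + 1) - Ψ m (k + 1)) / (x (m + 1) - x m)
              - (Ψ m (k + 1) - Ψ (m - 1) (k + 1)) / (x m - x (m - 1)))
              / ((x (m + 1) - x (m - 1)) / 2) :=
            div_nonneg (by linarith) hden.le
          have heps : 0 ≤ ε * (((Ψ (m + 1) (k + 1) - Ψ m (k + 1)) / (x (m + 1) - x m)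
              - (Ψ m (k + 1) - Ψ (m - 1) (k + 1)) / (x m - x (m - 1)))
              / ((x (m + 1) - x (m - 1)) / 2)) := mul_nonneg hε.le hdelta
          have haΨ : a m (k + 1) * Ψ m (k + 1) < 0 :=
            mul_neg_of_pos_of_neg (ha m hmN (k + 1) hk1) hmneg
          linarith
  intro j hj k hk
  exact main k hk j hj
end

section
/- Discrete stability: Under the hypotheses of the discrete maximum principle (a > α > 0 on the grid, ε > 0), any mesh function Ψ on the grid satisfies |Ψ(x_j,t_k)| ≤ max{ max_k |β₀^{N,M}Ψ(0,t_k)|, max_k |β₁^{N,M}Ψ(1,t_k)|, max_j |Ψ(x_j,0)|, (1/α)·max_{j,k} |L^{N,M}Ψ(x_j,t_k)| } for every mesh point (x_j,t_k). -/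
theorem key (N M : ℕ) (hN : 2 ≤ N) (hM : 1 ≤ M)
    (ε α : ℝ) (hε : 0 < ε) (hα : 0 < α)
    (x t : ℕ → ℝ)
    (hxmono : ∀ j, j < N → x j < x (j + 1))
    (htmono : ∀ k, k < M → t k < t (k + 1))
    (a Ψ : ℕ → ℕ → ℝ)
    (ha : ∀ j ≤ N, ∀ k ≤ M, α < a j k)
    (j k : ℕ) (hj : j ≤ N) (hk : k ≤ M)
    (hmax : ∀ j' ≤ N, ∀ k' ≤ M, |Ψ j' k'| ≤ Ψ j k) :
      Ψ j k ≤
        max (max (⨆ k' : Fin (M + 1), |Ψ 0 k' - (Ψ 1 k' - Ψ 0 k') / (x 1 - x 0)|)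
                 (⨆ k' : Fin (M + 1),
                   |Ψ N k' + (Ψ N k' - Ψ (N - 1) k') / (x N - x (N - 1))|))
            (max (⨆ j' : Fin (N + 1), |Ψ j' 0|)
                 ((1 / α) *
                  ⨆ p : {p : ℕ × ℕ // 1 ≤ p.1 ∧ p.1 < N ∧ 1 ≤ p.2 ∧ p.2 ≤ M},
                    |(Ψ (p : ℕ × ℕ).1 (p : ℕ × ℕ).2
                        - Ψ (p : ℕ × ℕ).1 ((p : ℕ × ℕ).2 - 1))
                        / (t (p : ℕ × ℕ).2 - t ((p : ℕ × ℕ).2 - 1))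
                      - ε * (((Ψ ((p : ℕ × ℕ).1 + 1) (p : ℕ × ℕ).2
                              - Ψ (p : ℕ × ℕ).1 (p : ℕ × ℕ).2)
                              / (x ((p : ℕ × ℕ).1 + 1) - x (p : ℕ × ℕ).1)
                            - (Ψ (p : ℕ × ℕ).1 (p : ℕ × ℕ).2
                              - Ψ ((p : ℕ × ℕ).1 - 1) (p : ℕ × ℕ).2)
                              / (x (p : ℕ × ℕ).1 - x ((p : ℕ × ℕ).1 - 1)))
                          / ((x ((p : ℕ × ℕ).1 + 1) - x ((p : ℕ × ℕ).1 - 1)) / 2))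
                      + a (p : ℕ × ℕ).1 (p : ℕ × ℕ).2
                          * Ψ (p : ℕ × ℕ).1 (p : ℕ × ℕ).2|)) := by
  haveI : Finite {p : ℕ × ℕ // 1 ≤ p.1 ∧ p.1 < N ∧ 1 ≤ p.2 ∧ p.2 ≤ M} := by
    apply Finite.of_injective
      (fun p => ((⟨p.1.1, Nat.lt_succ_of_lt p.2.2.1⟩,
        ⟨p.1.2, Nat.lt_succ_of_le p.2.2.2.2⟩) : Fin (N + 1) × Fin (M + 1)))
    rintro ⟨⟨a1, b1⟩, _⟩ ⟨⟨a2, b2⟩, _⟩ h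
    simp only [Prod.mk.injEq, Fin.mk.injEq] at h
    simp [Prod.ext_iff, h.1, h.2]
  have hm0 : 0 ≤ Ψ j k := le_trans (abs_nonneg _) (hmax j hj k hk)
  have bdd1 : BddAbove (Set.range fun k' : Fin (M + 1) =>
      |Ψ 0 k' - (Ψ 1 k' - Ψ 0 k') / (x 1 - x 0)|) := Finite.bddAbove_range _
  have bdd2 : BddAbove (Set.range fun k' : Fin (M + 1) =>
      |Ψ N k' + (Ψ N k' - Ψ (N - 1) k') / (x N - x (N - 1))|) := Finite.bddAbove_range _
  have bdd3 : BddAbove (Set.range fun j' : Fin (N + 1) => |Ψ j' 0|) := Finite.bddAbove_range _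
  rcases Nat.eq_zero_or_pos k with hk0 | hk1
  · subst hk0
    have h1 : |Ψ j 0| ≤ ⨆ j' : Fin (N + 1), |Ψ (j' : ℕ) 0| :=
      le_ciSup bdd3 (⟨j, Nat.lt_succ_of_le hj⟩ : Fin (N + 1))
    exact le_trans (le_trans (le_abs_self _) h1) (le_max_of_le_right (le_max_left _ _))
  rcases Nat.eq_zero_or_pos j with hj0 | hj1
  · subst hj0
    have h01 : x 0 < x 1 := hxmono 0 (by omega)
    have hΨ1 : Ψ 1 k ≤ Ψ 0 k := le_trans (le_abs_self _) (hmax 1 (by omega) k hk)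
    have hdiv : (Ψ 1 k - Ψ 0 k) / (x 1 - x 0) ≤ 0 :=
      div_nonpos_of_nonpos_of_nonneg (by linarith) (by linarith)
    have step : Ψ 0 k ≤ |Ψ 0 k - (Ψ 1 k - Ψ 0 k) / (x 1 - x 0)| :=
      le_trans (by linarith) (le_abs_self _)
    have h1 : |Ψ 0 (k : ℕ) - (Ψ 1 k - Ψ 0 k) / (x 1 - x 0)| ≤
        ⨆ k' : Fin (M + 1), |Ψ 0 (k' : ℕ) - (Ψ 1 k' - Ψ 0 k') / (x 1 - x 0)| :=
      le_ciSup bdd1 (⟨k, Nat.lt_succ_of_le hk⟩ : Fin (M + 1))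
    exact le_trans (le_trans step h1) (le_max_of_le_left (le_max_left _ _))
  by_cases hjN : j = N
  · subst hjN
    have hN1 : x (j - 1) < x j := by
      have := hxmono (j - 1) (by omega)
      rwa [show j - 1 + 1 = j by omega] at this
    have hΨ1 : Ψ (j - 1) k ≤ Ψ j k := le_trans (le_abs_self _) (hmax (j - 1) (by omega) k hk)
    have hdiv : 0 ≤ (Ψ j k - Ψ (j - 1) k) / (x j - x (j - 1)) :=
      div_nonneg (by linarith) (by linarith)
    have step : Ψ j k ≤ |Ψ j k + (Ψ j k - Ψ (j - 1) k) / (x j - x (j - 1))| :=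
      le_trans (by linarith) (le_abs_self _)
    have h1 : |Ψ j (k : ℕ) + (Ψ j k - Ψ (j - 1) k) / (x j - x (j - 1))| ≤
        ⨆ k' : Fin (M + 1), |Ψ j (k' : ℕ) + (Ψ j k' - Ψ (j - 1) k') / (x j - x (j - 1))| :=
      le_ciSup bdd2 (⟨k, Nat.lt_succ_of_le hk⟩ : Fin (M + 1))
    exact le_trans (le_trans step h1) (le_max_of_le_left (le_max_right _ _))
  -- interior case
  have hjN' : j < N := lt_of_le_of_ne hj hjN
  have htk : t (k - 1) < t k := by
    have := htmono (k - 1) (by omega)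
    rwa [show k - 1 + 1 = k by omega] at this
  have hxl : x (j - 1) < x j := by
    have := hxmono (j - 1) (by omega)
    rwa [show j - 1 + 1 = j by omega] at this
  have hxr : x j < x (j + 1) := hxmono j hjN'
  have hΨt : Ψ j (k - 1) ≤ Ψ j k := le_trans (le_abs_self _) (hmax j hj (k - 1) (by omega))
  have hΨr : Ψ (j + 1) k ≤ Ψ j k := le_trans (le_abs_self _) (hmax (j + 1) (by omega) k hk)
  have hΨl : Ψ (j - 1) k ≤ Ψ j k := le_trans (le_abs_self _) (hmax (j - 1) (by omega) k hk)
  set L := (Ψ j k - Ψ j (k - 1)) / (t k - t (k - 1))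
      - ε * (((Ψ (j + 1) k - Ψ j k) / (x (j + 1) - x j)
            - (Ψ j k - Ψ (j - 1) k) / (x j - x (j - 1)))
          / ((x (j + 1) - x (j - 1)) / 2))
      + a j k * Ψ j k with hL
  have hT : 0 ≤ (Ψ j k - Ψ j (k - 1)) / (t k - t (k - 1)) :=
    div_nonneg (by linarith) (by linarith)
  have hD : ((Ψ (j + 1) k - Ψ j k) / (x (j + 1) - x j)
      - (Ψ j k - Ψ (j - 1) k) / (x j - x (j - 1))) / ((x (j + 1) - x (j - 1)) / 2) ≤ 0 := by
    apply div_nonpos_of_nonpos_of_nonneg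
    · have h1 : (Ψ (j + 1) k - Ψ j k) / (x (j + 1) - x j) ≤ 0 :=
        div_nonpos_of_nonpos_of_nonneg (by linarith) (by linarith)
      have h2 : 0 ≤ (Ψ j k - Ψ (j - 1) k) / (x j - x (j - 1)) :=
        div_nonneg (by linarith) (by linarith)
      linarith
    · linarith
  have hεD : ε * (((Ψ (j + 1) k - Ψ j k) / (x (j + 1) - x j)
      - (Ψ j k - Ψ (j - 1) k) / (x j - x (j - 1)))
      / ((x (j + 1) - x (j - 1)) / 2)) ≤ 0 := mul_nonpos_of_nonneg_of_nonpos hε.le hD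
  have haΨ : α * Ψ j k ≤ a j k * Ψ j k :=
    mul_le_mul_of_nonneg_right (ha j hj k hk).le hm0
  have hαL : α * Ψ j k ≤ L := by rw [hL]; linarith
  set F : {p : ℕ × ℕ // 1 ≤ p.1 ∧ p.1 < N ∧ 1 ≤ p.2 ∧ p.2 ≤ M} → ℝ := fun p =>
    |(Ψ (p : ℕ × ℕ).1 (p : ℕ × ℕ).2 - Ψ (p : ℕ × ℕ).1 ((p : ℕ × ℕ).2 - 1))
        / (t (p : ℕ × ℕ).2 - t ((p : ℕ × ℕ).2 - 1))
      - ε * (((Ψ ((p : ℕ × ℕ).1 + 1) (p : ℕ × ℕ).2 - Ψ (p : ℕ × ℕ).1 (p : ℕ × ℕ).2)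
              / (x ((p : ℕ × ℕ).1 + 1) - x (p : ℕ × ℕ).1)
            - (Ψ (p : ℕ × ℕ).1 (p : ℕ × ℕ).2 - Ψ ((p : ℕ × ℕ).1 - 1) (p : ℕ × ℕ).2)
              / (x (p : ℕ × ℕ).1 - x ((p : ℕ × ℕ).1 - 1)))
          / ((x ((p : ℕ × ℕ).1 + 1) - x ((p : ℕ × ℕ).1 - 1)) / 2))
      + a (p : ℕ × ℕ).1 (p : ℕ × ℕ).2 * Ψ (p : ℕ × ℕ).1 (p : ℕ × ℕ).2| with hF
  have bdd4 : BddAbove (Set.range F) := Finite.bddAbove_range _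
  have hLsup : |L| ≤ ⨆ p, F p := le_ciSup bdd4 (⟨(j, k), ⟨hj1, hjN', hk1, hk⟩⟩ :
    {p : ℕ × ℕ // 1 ≤ p.1 ∧ p.1 < N ∧ 1 ≤ p.2 ∧ p.2 ≤ M})
  have hfin : Ψ j k ≤ (1 / α) * ⨆ p, F p := by
    have hstep : Ψ j k ≤ (1 / α) * L := by
      rw [one_div, ← div_eq_inv_mul, le_div_iff₀ hα]
      linarith [mul_comm α (Ψ j k), hαL]
    calc Ψ j k ≤ (1 / α) * L := hstep
      _ ≤ (1 / α) * |L| := by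
          apply mul_le_mul_of_nonneg_left (le_abs_self _) (by positivity)
      _ ≤ (1 / α) * ⨆ p, F p := mul_le_mul_of_nonneg_left hLsup (by positivity)
  exact le_trans hfin (le_max_of_le_right (le_max_right _ _))


/-- Discrete stability result for the finite difference operator. -/
theorem stmt_10 (N M : ℕ) (hN : 2 ≤ N) (hM : 1 ≤ M)
    (ε α : ℝ) (hε : 0 < ε) (hα : 0 < α)
    (x t : ℕ → ℝ)
    (hx0 : x 0 = 0) (hxN : x N = 1) (hxmono : ∀ j, j < N → x j < x (j + 1))
    (ht0 : t 0 = 0) (htmono : ∀ k, k < M → t k < t (k + 1))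
    (a Ψ : ℕ → ℕ → ℝ)
    (ha : ∀ j ≤ N, ∀ k ≤ M, α < a j k) :
    ∀ j ≤ N, ∀ k ≤ M,
      |Ψ j k| ≤
        max (max (⨆ k' : Fin (M + 1), |Ψ 0 k' - (Ψ 1 k' - Ψ 0 k') / (x 1 - x 0)|)
                 (⨆ k' : Fin (M + 1),
                   |Ψ N k' + (Ψ N k' - Ψ (N - 1) k') / (x N - x (N - 1))|))
            (max (⨆ j' : Fin (N + 1), |Ψ j' 0|)
                 ((1 / α) *
                  ⨆ p : {p : ℕ × ℕ // 1 ≤ p.1 ∧ p.1 < N ∧ 1 ≤ p.2 ∧ p.2 ≤ M},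
                    |(Ψ (p : ℕ × ℕ).1 (p : ℕ × ℕ).2
                        - Ψ (p : ℕ × ℕ).1 ((p : ℕ × ℕ).2 - 1))
                        / (t (p : ℕ × ℕ).2 - t ((p : ℕ × ℕ).2 - 1))
                      - ε * (((Ψ ((p : ℕ × ℕ).1 + 1) (p : ℕ × ℕ).2
                              - Ψ (p : ℕ × ℕ).1 (p : ℕ × ℕ).2)
                              / (x ((p : ℕ × ℕ).1 + 1) - x (p : ℕ × ℕ).1)
                            - (Ψ (p : ℕ × ℕ).1 (p : ℕ × ℕ).2
                              - Ψ ((p : ℕ × ℕ).1 - 1) (p : ℕ × ℕ).2)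
                              / (x (p : ℕ × ℕ).1 - x ((p : ℕ × ℕ).1 - 1)))
                          / ((x ((p : ℕ × ℕ).1 + 1) - x ((p : ℕ × ℕ).1 - 1)) / 2))
                      + a (p : ℕ × ℕ).1 (p : ℕ × ℕ).2
                          * Ψ (p : ℕ × ℕ).1 (p : ℕ × ℕ).2|)) := by
  obtain ⟨⟨j₀, k₀⟩, hmem, hmaxp⟩ :=
    Finset.exists_max_image ((Finset.range (N + 1)) ×ˢ (Finset.range (M + 1)))
      (fun p => |Ψ p.1 p.2|) ⟨(0, 0), by simp⟩
  simp only [Finset.mem_product, Finset.mem_range] at hmem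
  have hj₀ : j₀ ≤ N := by omega
  have hk₀ : k₀ ≤ M := by omega
  have hmaxΨ : ∀ j' ≤ N, ∀ k' ≤ M, |Ψ j' k'| ≤ |Ψ j₀ k₀| := by
    intro j' hj' k' hk'
    exact hmaxp (j', k') (by simp only [Finset.mem_product, Finset.mem_range]; omega)
  intro j hj k hk
  refine (hmaxΨ j hj k hk).trans ?_
  rcases le_or_gt 0 (Ψ j₀ k₀) with hpos | hneg
  · rw [abs_of_nonneg hpos]
    exact key N M hN hM ε α hε hα x t hxmono htmono a Ψ ha j₀ k₀ hj₀ hk₀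
      (fun j' hj' k' hk' => by rw [← abs_of_nonneg hpos]; exact hmaxΨ j' hj' k' hk')
  · rw [abs_of_neg hneg]
    have H := key N M hN hM ε α hε hα x t hxmono htmono a (fun j k => -Ψ j k) ha j₀ k₀ hj₀ hk₀
      (fun j' hj' k' hk' => by
        simp only [abs_neg]
        rw [← abs_of_neg hneg]; exact hmaxΨ j' hj' k' hk')
    beta_reduce at H
    refine H.trans (le_of_eq ?_)
    congr 1
    · congr 1
      · exact iSup_congr fun k' => by rw [← abs_neg]; congr 1; ring
      · exact iSup_congr fun k' => by rw [← abs_neg]; congr 1; ring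
    · congr 1
      · exact iSup_congr fun j' => abs_neg _
      · congr 1
        exact iSup_congr fun p => by rw [← abs_neg]; congr 1; ring
end
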